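/- Let the prior be θ ~ N(μ, σ²) and the likelihood be P(D|θ) = Φ((θ − m)/c₀) for constants m ∈ ℝ, c₀ > 0. Then the posterior mean is E[θ|D] = μ + (σ²/c)·𝒱((μ − m)/c), where c = √(c₀² + σ²) and 𝒱(x) = φ(x)/Φ(x). -/

import Mathlib

open MeasureTheory Real Set Filter

/-- Standard normal density. -/
noncomputable def stdNormalPDF (x : ℝ) : ℝ :=
  (Real.sqrt (2 * Real.pi))⁻¹ * Real.exp (-x ^ 2 / 2)

/-- Standard normal CDF. -/
noncomputable def stdNormalCDF (x : ℝ) : ℝ := ∫ u in Set.Iic x, stdNormalPDF u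

/-- Inverse Mills ratio `𝒱(x) = φ(x)/Φ(x)`. -/
noncomputable def millsV (x : ℝ) : ℝ := stdNormalPDF x / stdNormalCDF x

lemma sqrt2pi_pos : 0 < Real.sqrt (2 * Real.pi) := Real.sqrt_pos.2 (by positivity)

lemma pdf_pos (x : ℝ) : 0 < stdNormalPDF x := by
  unfold stdNormalPDF; positivity

lemma pdf_eq (x : ℝ) : stdNormalPDF x
    = (Real.sqrt (2 * Real.pi))⁻¹ * Real.exp (-(2⁻¹ : ℝ) * x ^ 2) := by
  unfold stdNormalPDF; ring_nf

lemma pdf_cont : Continuous stdNormalPDF := by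
  unfold stdNormalPDF; continuity

lemma pdf_fun_eq : stdNormalPDF
    = fun x => (Real.sqrt (2 * Real.pi))⁻¹ * Real.exp (-(2⁻¹ : ℝ) * x ^ 2) :=
  funext pdf_eq

lemma pdf_integrable : Integrable stdNormalPDF := by
  rw [pdf_fun_eq]
  exact (integrable_exp_neg_mul_sq (by norm_num : (0:ℝ) < 2⁻¹)).const_mul _

lemma pdf_integral : ∫ x, stdNormalPDF x = 1 := by
  rw [pdf_fun_eq]
  rw [integral_const_mul, integral_gaussian]
  rw [show Real.pi / 2⁻¹ = 2 * Real.pi by ring]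
  exact inv_mul_cancel₀ (ne_of_gt sqrt2pi_pos)

lemma pdf_le (x : ℝ) : stdNormalPDF x ≤ (Real.sqrt (2 * Real.pi))⁻¹ := by
  unfold stdNormalPDF
  have : Real.exp (-x ^ 2 / 2) ≤ 1 := Real.exp_le_one_iff.2 (by nlinarith [sq_nonneg x])
  nlinarith [inv_pos.2 sqrt2pi_pos]

lemma pdf_even (x : ℝ) : stdNormalPDF (-x) = stdNormalPDF x := by
  unfold stdNormalPDF; ring_nf

lemma x_mul_pdf_integrable : Integrable (fun x : ℝ => x * stdNormalPDF x) := by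
  have hb : Integrable (fun x : ℝ => 2 * Real.exp (-(3/8 : ℝ) * x ^ 2)) :=
    (integrable_exp_neg_mul_sq (by norm_num : (0:ℝ) < 3/8)).const_mul _
  refine Integrable.mono' hb ((continuous_id.mul pdf_cont).aestronglyMeasurable) ?_
  filter_upwards with x
  have h1 : |x| ≤ 2 * Real.exp ((1/8 : ℝ) * x ^ 2) := by
    have := Real.add_one_le_exp ((1/8 : ℝ) * x ^ 2)
    nlinarith [sq_abs x, abs_nonneg x]
  have h2 : stdNormalPDF x ≤ Real.exp (-x ^ 2 / 2) := by
    unfold stdNormalPDF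
    have h3 : (Real.sqrt (2 * Real.pi))⁻¹ ≤ 1 := by
      rw [inv_le_one_iff₀]
      right
      rw [show (1:ℝ) = Real.sqrt 1 by simp]
      exact Real.sqrt_le_sqrt (by nlinarith [Real.pi_gt_three])
    nlinarith [Real.exp_pos (-x ^ 2 / 2)]
  have h4 : Real.exp ((1/8 : ℝ) * x ^ 2) * Real.exp (-x ^ 2 / 2)
      = Real.exp (-(3/8 : ℝ) * x ^ 2) := by
    rw [← Real.exp_add]; ring_nf
  calc ‖x * stdNormalPDF x‖ = |x| * stdNormalPDF x := by
        rw [norm_mul, Real.norm_eq_abs, Real.norm_eq_abs, abs_of_pos (pdf_pos x)]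
    _ ≤ (2 * Real.exp ((1/8 : ℝ) * x ^ 2)) * Real.exp (-x ^ 2 / 2) := by
        apply mul_le_mul h1 h2 (le_of_lt (pdf_pos x)) (by positivity)
    _ = 2 * Real.exp (-(3/8 : ℝ) * x ^ 2) := by rw [mul_assoc, h4]

lemma x_mul_pdf_integral : ∫ x, x * stdNormalPDF x = 0 := by
  have h := integral_neg_eq_self (fun x : ℝ => x * stdNormalPDF x) volume
  simp_rw [pdf_even, neg_mul] at h
  rw [integral_neg] at h
  linarith

lemma cdf_nonneg (x : ℝ) : 0 ≤ stdNormalCDF x :=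
  setIntegral_nonneg measurableSet_Iic (fun u _ => (pdf_pos u).le)

lemma cdf_le_one (x : ℝ) : stdNormalCDF x ≤ 1 := by
  rw [← pdf_integral]
  exact setIntegral_le_integral pdf_integrable
    (Filter.Eventually.of_forall fun u => (pdf_pos u).le)

lemma cdf_pos (x : ℝ) : 0 < stdNormalCDF x := by
  unfold stdNormalCDF
  rw [setIntegral_pos_iff_support_of_nonneg_ae
    (Filter.Eventually.of_forall fun u => (pdf_pos u).le)
    pdf_integrable.integrableOn]
  have : Function.support stdNormalPDF = Set.univ := by
    ext u; simp [Function.mem_support, (pdf_pos u).ne']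
  rw [this, Set.univ_inter]
  simp [Real.volume_Iic]

lemma cdf_eq (x : ℝ) : stdNormalCDF x = stdNormalCDF 0 + ∫ u in (0:ℝ)..x, stdNormalPDF u := by
  unfold stdNormalCDF
  rw [← intervalIntegral.integral_Iic_sub_Iic pdf_integrable.integrableOn
    pdf_integrable.integrableOn]
  ring

lemma cdf_hasDerivAt (x : ℝ) : HasDerivAt stdNormalCDF (stdNormalPDF x) x := by
  have h : HasDerivAt (fun y => ∫ u in (0:ℝ)..y, stdNormalPDF u) (stdNormalPDF x) x :=
    intervalIntegral.integral_hasDerivAt_right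
      (pdf_integrable.intervalIntegrable)
      (pdf_cont.stronglyMeasurableAtFilter _ _)
      pdf_cont.continuousAt
  have := (h.const_add (stdNormalCDF 0))
  simpa [← cdf_eq] using this

lemma cdf_continuous : Continuous stdNormalCDF :=
  continuous_iff_continuousAt.2 fun x => (cdf_hasDerivAt x).continuousAt

lemma cdf_neg (x : ℝ) : stdNormalCDF (-x) = 1 - stdNormalCDF x := by
  have h1 : stdNormalCDF (-x) = ∫ u in Set.Ioi x, stdNormalPDF u := by
    have h := integral_comp_neg_Iic (-x) stdNormalPDF
    simp_rw [pdf_even] at h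
    rw [neg_neg] at h
    exact h
  have h2 : stdNormalCDF x + ∫ u in Set.Ioi x, stdNormalPDF u = 1 := by
    rw [← pdf_integral]
    exact intervalIntegral.integral_Iic_add_Ioi pdf_integrable.integrableOn pdf_integrable.integrableOn
  linarith

lemma cdf_zero : stdNormalCDF 0 = 1/2 := by
  have := cdf_neg 0
  rw [neg_zero] at this
  linarith

lemma cdf_tendsto_atBot : Tendsto stdNormalCDF atBot (nhds 0) := by
  have h0 : (0:ℝ) = ∫ x : ℝ, (0:ℝ) := (integral_zero _ _).symm
  rw [h0]
  have : ∀ y : ℝ, stdNormalCDF y = ∫ x, Set.indicator (Set.Iic y) stdNormalPDF x := by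
    intro y
    unfold stdNormalCDF
    rw [integral_indicator measurableSet_Iic]
  have hfun : stdNormalCDF = fun y => ∫ x, Set.indicator (Set.Iic y) stdNormalPDF x :=
    funext this
  rw [hfun]
  apply tendsto_integral_filter_of_dominated_convergence stdNormalPDF
  · exact Filter.Eventually.of_forall fun y =>
      (pdf_cont.aestronglyMeasurable).indicator measurableSet_Iic
  · refine Filter.Eventually.of_forall fun y => Filter.Eventually.of_forall fun x => ?_
    by_cases hx : x ∈ Set.Iic y
    · rw [Set.indicator_of_mem hx, Real.norm_eq_abs, abs_of_pos (pdf_pos x)]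
    · rw [Set.indicator_of_notMem hx]
      simpa using (pdf_pos x).le
  · exact pdf_integrable
  · refine Filter.Eventually.of_forall fun x => ?_
    have : ∀ᶠ y in atBot, Set.indicator (Set.Iic y) stdNormalPDF x = 0 := by
      filter_upwards [eventually_le_atBot (x - 1)] with y hy
      apply Set.indicator_of_notMem
      simp only [Set.mem_Iic, not_le]
      linarith
    exact Tendsto.congr' (this.mono fun y hy => hy.symm) tendsto_const_nhds

lemma pdf_hasDerivAt (x : ℝ) : HasDerivAt stdNormalPDF (-x * stdNormalPDF x) x := by
  have h1 : HasDerivAt (fun x : ℝ => -x ^ 2 / 2) (-x) x := by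
    have h := ((hasDerivAt_pow 2 x).neg).div_const 2
    norm_num at h
    refine h.congr_deriv ?_
    ring
  have h2 := (h1.exp).const_mul ((Real.sqrt (2 * Real.pi))⁻¹)
  have h3 : (Real.sqrt (2 * Real.pi))⁻¹ * (Real.exp (-x ^ 2 / 2) * -x)
      = -x * stdNormalPDF x := by unfold stdNormalPDF; ring
  rw [h3] at h2
  exact h2

lemma neg_sq_half_tendsto : Tendsto (fun x : ℝ => -x ^ 2 / 2) atBot atBot :=
  tendsto_atBot_mono (fun x => by nlinarith [sq_nonneg (x + 1), sq_nonneg x])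
    (tendsto_atBot_add_const_right _ 1 tendsto_id : Tendsto (fun x : ℝ => x + 1) atBot atBot)

lemma pdf_tendsto_atBot : Tendsto stdNormalPDF atBot (nhds 0) := by
  have h : Tendsto (fun x : ℝ => Real.exp (-x ^ 2 / 2)) atBot (nhds 0) :=
    Real.tendsto_exp_atBot.comp neg_sq_half_tendsto
  have h2 := h.const_mul ((Real.sqrt (2 * Real.pi))⁻¹)
  rw [mul_zero] at h2
  exact h2

-- product of two Gaussian densities
lemma pdf_mul_pdf (a b x : ℝ) :
    stdNormalPDF x * stdNormalPDF (a + b * x)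
      = stdNormalPDF (a / Real.sqrt (1 + b ^ 2))
        * stdNormalPDF (Real.sqrt (1 + b ^ 2) * x + a * b / Real.sqrt (1 + b ^ 2)) := by
  set s := Real.sqrt (1 + b ^ 2) with hs_def
  have hs2 : s ^ 2 = 1 + b ^ 2 := Real.sq_sqrt (by positivity)
  have hs : (0:ℝ) < s := Real.sqrt_pos.2 (by positivity)
  have hsne : s ≠ 0 := hs.ne'
  have key : -x ^ 2 / 2 + -(a + b * x) ^ 2 / 2
      = -(a / s) ^ 2 / 2 + -(s * x + a * b / s) ^ 2 / 2 := by
    field_simp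
    ring_nf
    linear_combination (x ^ 2 * s ^ 2 - a ^ 2) * hs2
  unfold stdNormalPDF
  calc (Real.sqrt (2*Real.pi))⁻¹ * Real.exp (-x ^ 2 / 2)
        * ((Real.sqrt (2*Real.pi))⁻¹ * Real.exp (-(a + b*x) ^ 2 / 2))
      = (Real.sqrt (2*Real.pi))⁻¹ * (Real.sqrt (2*Real.pi))⁻¹
        * Real.exp (-x ^ 2 / 2 + -(a + b*x) ^ 2 / 2) := by rw [Real.exp_add]; ring
    _ = (Real.sqrt (2*Real.pi))⁻¹ * (Real.sqrt (2*Real.pi))⁻¹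
        * Real.exp (-(a / s) ^ 2 / 2 + -(s * x + a * b / s) ^ 2 / 2) := by rw [key]
    _ = (Real.sqrt (2*Real.pi))⁻¹ * Real.exp (-(a / s) ^ 2 / 2)
        * ((Real.sqrt (2*Real.pi))⁻¹ * Real.exp (-(s * x + a * b / s) ^ 2 / 2)) := by
        rw [Real.exp_add]; ring

lemma J0 {s : ℝ} (hs : 0 < s) (e : ℝ) : ∫ x, stdNormalPDF (s * x + e) = 1 / s := by
  have h1 : (∫ x : ℝ, (fun y => stdNormalPDF (y + e)) (s * x))
      = |s⁻¹| • ∫ y : ℝ, stdNormalPDF (y + e) :=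
    Measure.integral_comp_mul_left (fun y => stdNormalPDF (y + e)) s
  simp only [smul_eq_mul] at h1
  rw [integral_add_right_eq_self stdNormalPDF e, pdf_integral] at h1
  rw [show (fun x : ℝ => stdNormalPDF (s * x + e)) = fun x : ℝ => (fun y => stdNormalPDF (y + e)) (s * x) from rfl] at *
  rw [h1, abs_of_pos (inv_pos.2 hs)]
  ring

lemma J1 {s : ℝ} (hs : 0 < s) (e : ℝ) :
    ∫ x, x * stdNormalPDF (s * x + e) = -e / s ^ 2 := by
  set g : ℝ → ℝ := fun y => ((y - e) / s) * stdNormalPDF y with hg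
  have hgx : ∀ x : ℝ, x * stdNormalPDF (s * x + e) = (fun y => g (y + e)) (s * x) := by
    intro x
    simp only [hg]
    rw [show s * x + e - e = s * x by ring]
    rw [mul_comm s x, mul_div_assoc, div_self hs.ne', mul_one]
  have h1 : (∫ x : ℝ, (fun y => g (y + e)) (s * x)) = |s⁻¹| • ∫ y : ℝ, g (y + e) :=
    Measure.integral_comp_mul_left (fun y => g (y + e)) s
  have h2 : ∫ y : ℝ, g (y + e) = ∫ y, g y := integral_add_right_eq_self g e
  have h3 : ∫ y, g y = -e / s := by
    have hsplit : ∀ y : ℝ, g y = (1 / s) * (y * stdNormalPDF y) - (e / s) * stdNormalPDF y := by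
      intro y; simp only [hg]; ring
    simp_rw [hsplit]
    rw [integral_sub (x_mul_pdf_integrable.const_mul _) (pdf_integrable.const_mul _),
      integral_const_mul, integral_const_mul, x_mul_pdf_integral, pdf_integral]
    ring
  calc ∫ x, x * stdNormalPDF (s * x + e) = ∫ x : ℝ, (fun y => g (y + e)) (s * x) := by
        simp_rw [hgx]
    _ = |s⁻¹| • ∫ y : ℝ, g (y + e) := h1
    _ = -e / s ^ 2 := by
        rw [h2, h3, abs_of_pos (inv_pos.2 hs), smul_eq_mul]
        rw [pow_two, div_mul_eq_div_div, div_eq_mul_inv (-e / s), mul_comm]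


lemma I1 {u : ℝ → ℝ} (hu : Continuous u) :
    Integrable (fun x => stdNormalPDF x * stdNormalCDF (u x)) := by
  refine Integrable.mono' pdf_integrable
    ((pdf_cont.mul (cdf_continuous.comp hu)).aestronglyMeasurable) ?_
  filter_upwards with x
  rw [Real.norm_eq_abs, abs_mul, abs_of_pos (pdf_pos x), abs_of_nonneg (cdf_nonneg _)]
  nlinarith [cdf_le_one (u x), pdf_pos x]

lemma I2 {u : ℝ → ℝ} (hu : Continuous u) :
    Integrable (fun x => x * stdNormalPDF x * stdNormalCDF (u x)) := by
  refine Integrable.mono' x_mul_pdf_integrable.abs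
    (((continuous_id.mul pdf_cont).mul (cdf_continuous.comp hu)).aestronglyMeasurable) ?_
  filter_upwards with x
  rw [Real.norm_eq_abs, abs_mul, abs_of_nonneg (cdf_nonneg _)]
  nlinarith [cdf_le_one (u x), abs_nonneg (x * stdNormalPDF x), cdf_nonneg (u x)]

lemma P0 (a b : ℝ) :
    ∫ x, stdNormalPDF x * stdNormalPDF (a + b * x)
      = (1 / Real.sqrt (1 + b ^ 2)) * stdNormalPDF (a / Real.sqrt (1 + b ^ 2)) := by
  have hs : (0:ℝ) < Real.sqrt (1 + b ^ 2) := Real.sqrt_pos.2 (by positivity)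
  simp_rw [pdf_mul_pdf a b]
  rw [integral_const_mul, J0 hs]
  ring

lemma P1 (a b : ℝ) :
    ∫ x, x * (stdNormalPDF x * stdNormalPDF (a + b * x))
      = -(a * b) / (Real.sqrt (1 + b ^ 2)) ^ 3 * stdNormalPDF (a / Real.sqrt (1 + b ^ 2)) := by
  set s := Real.sqrt (1 + b ^ 2) with hs_def
  have hs : (0:ℝ) < s := Real.sqrt_pos.2 (by positivity)
  have hpt : ∀ x : ℝ, x * (stdNormalPDF x * stdNormalPDF (a + b * x))
      = stdNormalPDF (a / s) * (x * stdNormalPDF (s * x + a * b / s)) := by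
    intro x
    rw [pdf_mul_pdf a b, ← hs_def]
    ring
  simp_rw [hpt]
  rw [integral_const_mul, J1 hs]
  field_simp

lemma A0 (b : ℝ) : ∫ x, stdNormalPDF x * stdNormalCDF (b * x) = 1 / 2 := by
  set J := ∫ x, stdNormalPDF x * stdNormalCDF (b * x) with hJ
  have h := integral_neg_eq_self (fun x => stdNormalPDF x * stdNormalCDF (b * x)) volume
  have heq : ∀ x : ℝ, stdNormalPDF (-x) * stdNormalCDF (b * -x)
      = stdNormalPDF x * (1 - stdNormalCDF (b * x)) := by
    intro x
    rw [pdf_even, show b * -x = -(b * x) by ring, cdf_neg]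
  simp_rw [heq] at h
  have hsub : ∫ x, stdNormalPDF x * (1 - stdNormalCDF (b * x))
      = (∫ x, stdNormalPDF x) - ∫ x, stdNormalPDF x * stdNormalCDF (b * x) := by
    simp_rw [mul_sub, mul_one]
    exact integral_sub pdf_integrable (I1 (continuous_const.mul continuous_id))
  rw [hsub, pdf_integral] at h
  rw [hJ]
  linarith [h]

lemma hasDerivAt_cdf_affine (b x a : ℝ) :
    HasDerivAt (fun a => stdNormalCDF (a + b * x)) (stdNormalPDF (a + b * x)) a := by
  have hi : HasDerivAt (fun a : ℝ => a + b * x) 1 a := (hasDerivAt_id a).add_const _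
  have h := (cdf_hasDerivAt (a + b * x)).comp a hi
  simpa [Function.comp_def] using h

lemma hasDerivAt_cdf_div (s a : ℝ) (hs : s ≠ 0) :
    HasDerivAt (fun a => stdNormalCDF (a / s)) ((1 / s) * stdNormalPDF (a / s)) a := by
  have hi : HasDerivAt (fun a : ℝ => a / s) (1 / s) a := by
    simpa using (hasDerivAt_id a).div_const s
  have h := (cdf_hasDerivAt (a / s)).comp a hi
  simpa [mul_comm, Function.comp_def] using h

lemma hasDerivAt_pdf_div (s a : ℝ) (hs : s ≠ 0) :
    HasDerivAt (fun a => stdNormalPDF (a / s))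
      (-(a / s ^ 2) * stdNormalPDF (a / s)) a := by
  have hi : HasDerivAt (fun a : ℝ => a / s) (1 / s) a := by
    simpa using (hasDerivAt_id a).div_const s
  have h := (pdf_hasDerivAt (a / s)).comp a hi
  have : -(a / s) * stdNormalPDF (a / s) * (1 / s) = -(a / s ^ 2) * stdNormalPDF (a / s) := by
    ring
  rwa [this] at h

lemma K0_deriv (b a₀ : ℝ) :
    HasDerivAt (fun a => ∫ x, stdNormalPDF x * stdNormalCDF (a + b * x))
      (∫ x, stdNormalPDF x * stdNormalPDF (a₀ + b * x)) a₀ := by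
  have key := hasDerivAt_integral_of_dominated_loc_of_deriv_le
    (F := fun a x => stdNormalPDF x * stdNormalCDF (a + b * x))
    (F' := fun a x => stdNormalPDF x * stdNormalPDF (a + b * x))
    (bound := fun x => stdNormalPDF x * (Real.sqrt (2 * Real.pi))⁻¹)
    (x₀ := a₀) (Metric.ball_mem_nhds a₀ one_pos)
    (Filter.Eventually.of_forall fun a =>
      (pdf_cont.mul (cdf_continuous.comp (by continuity))).aestronglyMeasurable)
    (I1 (by continuity))
    ((pdf_cont.mul (pdf_cont.comp (by continuity))).aestronglyMeasurable)
    ?_ (pdf_integrable.mul_const _) ?_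
  · exact key.2
  · filter_upwards with x a _
    rw [Real.norm_eq_abs, abs_mul, abs_of_pos (pdf_pos x), abs_of_pos (pdf_pos _)]
    exact mul_le_mul_of_nonneg_left (pdf_le _) (pdf_pos x).le
  · filter_upwards with x a _
    exact (hasDerivAt_cdf_affine b x a).const_mul _

lemma K0 (b a : ℝ) :
    ∫ x, stdNormalPDF x * stdNormalCDF (a + b * x)
      = stdNormalCDF (a / Real.sqrt (1 + b ^ 2)) := by
  set s := Real.sqrt (1 + b ^ 2) with hs_def
  have hs : (0:ℝ) < s := Real.sqrt_pos.2 (by positivity)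
  set g : ℝ → ℝ := fun a =>
    (∫ x, stdNormalPDF x * stdNormalCDF (a + b * x)) - stdNormalCDF (a / s) with hg
  have hderiv : ∀ a, HasDerivAt g 0 a := by
    intro a
    have h1 := K0_deriv b a
    rw [P0 a b, ← hs_def] at h1
    have h2 := hasDerivAt_cdf_div s a hs.ne'
    simpa [hg, Pi.sub_def] using h1.sub h2
  have hconst : g a = g 0 :=
    is_const_of_deriv_eq_zero (fun x => (hderiv x).differentiableAt)
      (fun x => (hderiv x).deriv) a 0
  have h0 : g 0 = 0 := by
    rw [hg]
    simp only [zero_add, zero_div]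
    rw [A0 b, cdf_zero]
    ring
  have := hconst.trans h0
  rw [hg] at this
  simpa [sub_eq_zero] using this

lemma K1_deriv (b a₀ : ℝ) :
    HasDerivAt (fun a => ∫ x, x * stdNormalPDF x * stdNormalCDF (a + b * x))
      (∫ x, x * stdNormalPDF x * stdNormalPDF (a₀ + b * x)) a₀ := by
  have key := hasDerivAt_integral_of_dominated_loc_of_deriv_le
    (F := fun a x => x * stdNormalPDF x * stdNormalCDF (a + b * x))
    (F' := fun a x => x * stdNormalPDF x * stdNormalPDF (a + b * x))
    (bound := fun x => |x * stdNormalPDF x| * (Real.sqrt (2 * Real.pi))⁻¹)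
    (x₀ := a₀) (Metric.ball_mem_nhds a₀ one_pos)
    (Filter.Eventually.of_forall fun a =>
      ((continuous_id.mul pdf_cont).mul (cdf_continuous.comp (by continuity))).aestronglyMeasurable)
    (I2 (by continuity))
    (((continuous_id.mul pdf_cont).mul (pdf_cont.comp (by continuity))).aestronglyMeasurable)
    ?_ (x_mul_pdf_integrable.abs.mul_const _) ?_
  · exact key.2
  · filter_upwards with x a _
    rw [Real.norm_eq_abs, abs_mul, abs_of_pos (pdf_pos (a + b * x))]
    exact mul_le_mul_of_nonneg_left (pdf_le _) (abs_nonneg _)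
  · filter_upwards with x a _
    exact (hasDerivAt_cdf_affine b x a).const_mul _

lemma K1_tendsto (b : ℝ) :
    Tendsto (fun a => ∫ x, x * stdNormalPDF x * stdNormalCDF (a + b * x)) atBot (nhds 0) := by
  have h0 : (0:ℝ) = ∫ x : ℝ, (0:ℝ) := (integral_zero _ _).symm
  rw [h0]
  apply tendsto_integral_filter_of_dominated_convergence (fun x => |x * stdNormalPDF x|)
  · exact Filter.Eventually.of_forall fun a =>
      ((continuous_id.mul pdf_cont).mul (cdf_continuous.comp (by continuity))).aestronglyMeasurable
  · refine Filter.Eventually.of_forall fun a => Filter.Eventually.of_forall fun x => ?_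
    rw [Real.norm_eq_abs, abs_mul, abs_of_nonneg (cdf_nonneg _)]
    nlinarith [cdf_le_one (a + b * x), abs_nonneg (x * stdNormalPDF x), cdf_nonneg (a + b * x)]
  · exact x_mul_pdf_integrable.abs
  · refine Filter.Eventually.of_forall fun x => ?_
    have h1 : Tendsto (fun a : ℝ => a + b * x) atBot atBot :=
      tendsto_atBot_add_const_right _ _ tendsto_id
    have h2 := (cdf_tendsto_atBot.comp h1).const_mul (x * stdNormalPDF x)
    rw [mul_zero] at h2
    exact h2

lemma K1 (b a : ℝ) :
    ∫ x, x * stdNormalPDF x * stdNormalCDF (a + b * x)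
      = (b / Real.sqrt (1 + b ^ 2)) * stdNormalPDF (a / Real.sqrt (1 + b ^ 2)) := by
  set s := Real.sqrt (1 + b ^ 2) with hs_def
  have hs : (0:ℝ) < s := Real.sqrt_pos.2 (by positivity)
  set g : ℝ → ℝ := fun a =>
    (∫ x, x * stdNormalPDF x * stdNormalCDF (a + b * x))
      - (b / s) * stdNormalPDF (a / s) with hg
  have hderiv : ∀ a, HasDerivAt g 0 a := by
    intro a
    have h1 := K1_deriv b a
    have hP : ∫ x, x * stdNormalPDF x * stdNormalPDF (a + b * x)
        = -(a * b) / s ^ 3 * stdNormalPDF (a / s) := by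
      simp_rw [mul_assoc]
      rw [P1 a b, ← hs_def]
    rw [hP] at h1
    have h2 := (hasDerivAt_pdf_div s a hs.ne').const_mul (b / s)
    have h3 : (b / s) * (-(a / s ^ 2) * stdNormalPDF (a / s))
        = -(a * b) / s ^ 3 * stdNormalPDF (a / s) := by ring
    rw [h3] at h2
    simpa [hg, Pi.sub_def] using h1.sub h2
  have hconst : ∀ a', g a' = g a :=
    fun a' => is_const_of_deriv_eq_zero (fun x => (hderiv x).differentiableAt)
      (fun x => (hderiv x).deriv) a' a
  have hlim : Tendsto g atBot (nhds 0) := by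
    rw [hg]
    have h1 := K1_tendsto b
    have h2 : Tendsto (fun a : ℝ => (b / s) * stdNormalPDF (a / s)) atBot (nhds 0) := by
      have hd : Tendsto (fun a : ℝ => a / s) atBot atBot := by
        apply tendsto_id.atBot_div_const hs
      have := (pdf_tendsto_atBot.comp hd).const_mul (b / s)
      rwa [mul_zero] at this
    have := h1.sub h2
    rwa [sub_zero] at this
  have hlim2 : Tendsto g atBot (nhds (g a)) := by
    apply Tendsto.congr' _ (tendsto_const_nhds (x := g a))
    filter_upwards with a' using (hconst a').symm
  have : g a = 0 := tendsto_nhds_unique hlim2 hlim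
  rw [hg] at this
  simpa [sub_eq_zero] using this

lemma subst_affine {σ : ℝ} (hσ : 0 < σ) (μ : ℝ) (G : ℝ → ℝ) :
    ∫ θ : ℝ, G ((θ - μ) / σ) = σ * ∫ x, G x := by
  have h1 : ∫ θ : ℝ, (fun u => G (u / σ)) (θ - μ) = ∫ u : ℝ, G (u / σ) :=
    integral_sub_right_eq_self (fun u => G (u / σ)) μ
  have h2 : ∫ u : ℝ, G (u / σ) = |σ| • ∫ x, G x := Measure.integral_comp_div G σ
  rw [show (fun θ : ℝ => G ((θ - μ) / σ)) = fun θ : ℝ => (fun u => G (u / σ)) (θ - μ) from rfl]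
  rw [h1, h2, abs_of_pos hσ, smul_eq_mul]

/-- TrueSkill-style posterior mean: with prior `N(μ, σ²)` and likelihood
`Φ((θ−m)/c₀)`, the posterior mean is `μ + (σ²/c)·𝒱((μ−m)/c)` with
`c = √(c₀² + σ²)`. -/
theorem truncated_probit_posterior_mean
    (μ σ m c₀ c : ℝ) (hσ : 0 < σ) (hc₀ : 0 < c₀)
    (hc : c = Real.sqrt (c₀ ^ 2 + σ ^ 2)) :
    (∫ θ : ℝ, θ * (stdNormalPDF ((θ - μ) / σ) * stdNormalCDF ((θ - m) / c₀))) /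
        (∫ θ : ℝ, stdNormalPDF ((θ - μ) / σ) * stdNormalCDF ((θ - m) / c₀)) =
      μ + σ ^ 2 / c * millsV ((μ - m) / c) := by
  have hcpos : 0 < c := by
    rw [hc]
    exact Real.sqrt_pos.2 (by positivity)
  set a : ℝ := (μ - m) / c₀ with ha
  set b : ℝ := σ / c₀ with hb
  have hsc : Real.sqrt (1 + b ^ 2) = c / c₀ := by
    rw [hb, hc, show 1 + (σ / c₀) ^ 2 = (c₀ ^ 2 + σ ^ 2) / c₀ ^ 2 by field_simp,
      Real.sqrt_div (by positivity) _, Real.sqrt_sq hc₀.le]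
  have has : a / Real.sqrt (1 + b ^ 2) = (μ - m) / c := by
    rw [hsc, ha]
    field_simp
  have hbs : b / Real.sqrt (1 + b ^ 2) = σ / c := by
    rw [hsc, hb]
    field_simp
  -- pointwise identification of the integrands
  have hpt : ∀ θ : ℝ, stdNormalCDF ((θ - m) / c₀) = stdNormalCDF (a + b * ((θ - μ) / σ)) := by
    intro θ
    congr 1
    rw [ha, hb]
    field_simp
    ring
  -- denominator
  have hden : (∫ θ : ℝ, stdNormalPDF ((θ - μ) / σ) * stdNormalCDF ((θ - m) / c₀))
      = σ * stdNormalCDF ((μ - m) / c) := by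
    have h1 : (∫ θ : ℝ, stdNormalPDF ((θ - μ) / σ) * stdNormalCDF ((θ - m) / c₀))
        = ∫ θ : ℝ, (fun x => stdNormalPDF x * stdNormalCDF (a + b * x)) ((θ - μ) / σ) := by
      congr 1
      funext θ
      simp only
      rw [hpt θ]
    rw [h1, subst_affine hσ μ (fun x => stdNormalPDF x * stdNormalCDF (a + b * x)), K0, has]
  -- numerator
  have hnum : (∫ θ : ℝ, θ * (stdNormalPDF ((θ - μ) / σ) * stdNormalCDF ((θ - m) / c₀)))
      = σ * (σ * (σ / c) * stdNormalPDF ((μ - m) / c) + μ * stdNormalCDF ((μ - m) / c)) := by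
    have h1 : (∫ θ : ℝ, θ * (stdNormalPDF ((θ - μ) / σ) * stdNormalCDF ((θ - m) / c₀)))
        = ∫ θ : ℝ, (fun x => (σ * x + μ) * (stdNormalPDF x * stdNormalCDF (a + b * x)))
            ((θ - μ) / σ) := by
      congr 1
      funext θ
      simp only
      rw [← hpt θ, show σ * ((θ - μ) / σ) + μ = θ by field_simp; ring]
    rw [h1, subst_affine hσ μ
      (fun x => (σ * x + μ) * (stdNormalPDF x * stdNormalCDF (a + b * x)))]
    have h2 : (∫ x : ℝ, (σ * x + μ) * (stdNormalPDF x * stdNormalCDF (a + b * x)))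
        = σ * (∫ x : ℝ, x * stdNormalPDF x * stdNormalCDF (a + b * x))
          + μ * ∫ x : ℝ, stdNormalPDF x * stdNormalCDF (a + b * x) := by
      have e1 : ∀ x : ℝ, (σ * x + μ) * (stdNormalPDF x * stdNormalCDF (a + b * x))
          = σ * (x * stdNormalPDF x * stdNormalCDF (a + b * x))
            + μ * (stdNormalPDF x * stdNormalCDF (a + b * x)) := fun x => by ring
      simp_rw [e1]
      rw [integral_add ((I2 (by continuity)).const_mul σ) ((I1 (by continuity)).const_mul μ),
        integral_const_mul, integral_const_mul]
    rw [h2, K0, K1, has, hbs]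
    ring
  rw [hnum, hden, millsV]
  have hΦ : 0 < stdNormalCDF ((μ - m) / c) := cdf_pos _
  field_simp
  ring
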